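/- Every zero of Δ(λ) = e^{-iλ}(1+iλ) − e^{iλ}(1−iλ) is real. -/

import Mathlib

open Complex

lemma aux_sinh_lt (y : ℝ) (hy : 0 < y) : Real.sinh y < y * Real.cosh y := by
  have hf : ∀ t : ℝ, HasDerivAt (fun t => t * Real.cosh t - Real.sinh t) (t * Real.sinh t) t := by
    intro t
    have h1 := (hasDerivAt_id t).mul (Real.hasDerivAt_cosh t)
    have h2 := Real.hasDerivAt_sinh t
    exact (h1.sub h2).congr_deriv (by simp only [id_eq, one_mul]; ring)
  have hmono : StrictMonoOn (fun t => t * Real.cosh t - Real.sinh t) (Set.Ici (0:ℝ)) := by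
    apply strictMonoOn_of_deriv_pos (convex_Ici 0)
    · exact ((continuous_id.mul Real.continuous_cosh).sub Real.continuous_sinh).continuousOn
    · intro t ht
      rw [interior_Ici, Set.mem_Ioi] at ht
      rw [(hf t).deriv]
      exact mul_pos ht (Real.sinh_pos_iff.mpr ht)
  have := hmono (Set.mem_Ici.mpr le_rfl) (Set.mem_Ici.mpr hy.le) hy
  simpa using this

/-- Every zero of Δ(λ) = e^{-iλ}(1+iλ) − e^{iλ}(1−iλ) is real. -/
theorem stmt3 (l : ℂ)
    (h : Complex.exp (-I * l) * (1 + I * l) - Complex.exp (I * l) * (1 - I * l) = 0) :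
    l.im = 0 := by
  -- Step 1: the zero condition is equivalent to sin l = l cos l
  have key : Complex.sin l = l * Complex.cos l := by
    rw [Complex.sin, Complex.cos]
    have h2 : Complex.exp (-(l*I)) * (1 + I * l) - Complex.exp (l*I) * (1 - I * l) = 0 := by
      rw [mul_comm l I, ← neg_mul]; exact h
    field_simp
    linear_combination I * h2 - (Complex.exp (-(l*I)) + Complex.exp (l*I))*l*Complex.I_sq
  set x : ℝ := l.re with hx
  set y : ℝ := l.im with hy
  set c : ℝ := Complex.normSq (Complex.cos l) with hcdef
  have hconj : Complex.sin ((starRingEnd ℂ) l) = (starRingEnd ℂ) l * Complex.cos ((starRingEnd ℂ) l) := by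
    rw [Complex.sin_conj, Complex.cos_conj, ← map_mul, key]
  have hcc : Complex.cos l * Complex.cos ((starRingEnd ℂ) l) = (c : ℂ) := by
    rw [Complex.cos_conj, Complex.mul_conj]
  have hsub : l - (starRingEnd ℂ) l = ((2*y : ℝ) : ℂ) * I := by
    apply Complex.ext <;> simp [hy] <;> ring
  have hadd : l + (starRingEnd ℂ) l = ((2*x : ℝ) : ℂ) := by
    apply Complex.ext <;> simp [hx] <;> ring
  -- Step 2: sinh(2y) = 2y*c
  have E1 : Complex.sin (l - (starRingEnd ℂ) l) = (l - (starRingEnd ℂ) l) * (c : ℂ) := by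
    rw [Complex.sin_sub, key, hconj]
    linear_combination (l - (starRingEnd ℂ) l) * hcc
  rw [hsub] at E1
  have E1' : (Real.sinh (2*y) : ℂ) * I = ((2*y : ℝ) : ℂ) * (c:ℂ) * I := by
    rw [Complex.ofReal_sinh, ← Complex.sin_mul_I]
    rw [E1]; ring
  have h1 : Real.sinh (2*y) = 2*y*c := by
    have := mul_right_cancel₀ Complex.I_ne_zero E1'
    exact_mod_cast this
  -- Step 3: sin(2x) = 2x*c
  have E2 : Complex.sin (l + (starRingEnd ℂ) l) = (l + (starRingEnd ℂ) l) * (c : ℂ) := by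
    rw [Complex.sin_add, key, hconj]
    linear_combination (l + (starRingEnd ℂ) l) * hcc
  rw [hadd] at E2
  have h2 : Real.sin (2*x) = 2*x*c := by
    have : (Real.sin (2*x) : ℂ) = ((2*x*c : ℝ) : ℂ) := by
      rw [Complex.ofReal_sin, E2]; push_cast; ring
    exact_mod_cast this
  -- Step 4: real analysis
  by_contra hy0
  have hc1 : 1 < c := by
    rcases lt_or_gt_of_ne hy0 with hneg | hpos
    · have : Real.sinh (2*y) < 2*y := Real.sinh_lt_self_iff.mpr (by linarith)
      nlinarith
    · have : 2*y < Real.sinh (2*y) := Real.self_lt_sinh_iff.mpr (by linarith)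
      nlinarith
  rcases eq_or_ne x 0 with hx0 | hx0
  · -- purely imaginary case: l = y*I, so c = cosh(y)^2 and sinh y = y cosh y
    have hl : l = (y : ℝ) * I := by
      apply Complex.ext <;> simp [← hx, hx0, hy]
    have hcosl : Complex.cos l = (Real.cosh y : ℂ) := by
      rw [hl, Complex.cos_mul_I, Complex.ofReal_cosh]
    have hcc' : c = Real.cosh y ^ 2 := by
      rw [hcdef, hcosl, Complex.normSq_ofReal]; ring
    have hsinh2 : Real.sinh (2*y) = 2 * Real.sinh y * Real.cosh y := by
      rw [two_mul, Real.sinh_add]; ring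
    have hch : 0 < Real.cosh y := Real.cosh_pos y
    have heq : Real.sinh y = y * Real.cosh y := by
      have : 2 * Real.sinh y * Real.cosh y = 2*y*(Real.cosh y^2) := by
        rw [← hsinh2, h1, hcc']
      nlinarith
    rcases lt_or_gt_of_ne hy0 with hneg | hpos
    · have := aux_sinh_lt (-y) (by linarith)
      rw [Real.sinh_neg, Real.cosh_neg] at this
      nlinarith
    · have := aux_sinh_lt y hpos
      nlinarith
  · rcases lt_or_gt_of_ne hx0 with hneg | hpos
    · have hs : Real.sin (-(2*x)) < -(2*x) := Real.sin_lt (by linarith)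
      rw [Real.sin_neg] at hs
      nlinarith
    · have hs : Real.sin (2*x) < 2*x := Real.sin_lt (by linarith)
      nlinarith
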